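/- Let r ≥ 1 and let X = {x_0,…,x_{r−1}} and Y = {y_0,…,y_{r−1}} be disjoint r-element sets. Let H be the r-uniform hypergraph on X ∪ Y whose edges are the sets e with |e ∩ {x_i, y_i}| = 1 for all i. There exists a family F of partial functions from X ∪ Y to {0,1}, one function φ_e with domain e for each e ∈ H (so F is unary with dom(F) = H), such that every F-coloring f : X ∪ Y → {0,1} satisfies: f(x_i) ≠ f(y_i) for all i, and the number of indices i with f(x_i) = 1 is odd. -/

import Mathlib

open Finset

/-- The domain of a partial map `φ : X ⇀ Bool` (encoded as `X → Option Bool`). -/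
def pdom {X : Type*} [Fintype X] (φ : X → Option Bool) : Finset X :=
  Finset.univ.filter (fun x => (φ x).isSome)

/-- A total function `f : X → Bool` extends the partial map `φ`. -/
def PExtends {X : Type*} (f : X → Bool) (φ : X → Option Bool) : Prop :=
  ∀ x b, φ x = some b → f x = b

instance {X : Type*} [Fintype X] (f : X → Bool) : DecidablePred (PExtends f) :=
  fun φ => inferInstanceAs (Decidable (∀ x b, φ x = some b → f x = b))

/-- The weight of a family of partial maps: `∑ 2^{-|dom φ|}`. -/
noncomputable def weight {X : Type*} [Fintype X] (F : Finset (X → Option Bool)) : ℝ :=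
  ∑ φ ∈ F, (1/2 : ℝ) ^ (pdom φ).card

/-- `F` is a 2-fold cover of the hypergraph `H`. -/
def IsCover {X : Type*} [Fintype X] (H : Finset (Finset X)) (F : Finset (X → Option Bool)) : Prop :=
  (∀ φ ∈ F, pdom φ ∈ H) ∧
  (∀ φ ∈ F, ∀ ψ ∈ F, φ ≠ ψ → pdom φ = pdom ψ → ∀ x ∈ pdom φ, φ x ≠ ψ x)

theorem fin_pred_val (r : ℕ) [NeZero r] (m : Fin r) (h : m ≠ 0) : m.val = (m-1).val + 1 := by
  have h1 : (m - 1).val = (r - (1:Fin r).val + m.val) % r := by rw [Fin.sub_def]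
  rw [Fin.val_one'] at h1
  have h3 : m.val < r := m.isLt
  have h4 : m.val ≠ 0 := fun h0 => h (Fin.ext h0)
  rcases Nat.lt_or_ge r 2 with h5 | h5
  · omega
  · have h6 : 1 % r = 1 := Nat.mod_eq_of_lt (by omega)
    have h7 : r - 1 % r + m.val = (m.val - 1) + 1 * r := by omega
    rw [h7, Nat.add_mul_mod_self_right, Nat.mod_eq_of_lt (by omega)] at h1
    omega

def phi (r : ℕ) [NeZero r] (s : Fin r → Bool) : Fin r × Bool → Option Bool :=
  fun p => if p.2 = s p.1 then some (s (p.1 + 1)) else none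

lemma mem_pdom_phi (r : ℕ) [NeZero r] (s : Fin r → Bool) (p : Fin r × Bool) :
    p ∈ pdom (phi r s) ↔ p.2 = s p.1 := by
  by_cases h : p.2 = s p.1 <;> simp [pdom, phi, h]

lemma extends_phi (r : ℕ) [NeZero r] (s : Fin r → Bool) (f : Fin r × Bool → Bool)
    (h : ∀ i, f (i, s i) = s (i + 1)) : PExtends f (phi r s) := by
  rintro ⟨i, c⟩ b hp
  by_cases hc : c = s i
  · rw [phi, if_pos hc] at hp
    rw [hc, h i, Option.some_inj.mp hp]
  · rw [phi, if_neg hc] at hp; exact absurd hp (by simp)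


open Fin.NatCast Fin.CommRing in
theorem stmt_17 (r : ℕ) (hr : 1 ≤ r) :
    ∃ F : Finset (Fin r × Bool → Option Bool),
      (∀ φ ∈ F, pdom φ ∈ (Finset.univ.filter (fun e : Finset (Fin r × Bool) =>
        ∀ i : Fin r, ((i, false) ∈ e ∧ (i, true) ∉ e) ∨ ((i, false) ∉ e ∧ (i, true) ∈ e)))) ∧
      (∀ e ∈ (Finset.univ.filter (fun e : Finset (Fin r × Bool) =>
        ∀ i : Fin r, ((i, false) ∈ e ∧ (i, true) ∉ e) ∨ ((i, false) ∉ e ∧ (i, true) ∈ e))),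
        ∃! φ, φ ∈ F ∧ pdom φ = e) ∧
      (∀ f : Fin r × Bool → Bool, (∀ φ ∈ F, ¬ PExtends f φ) →
        (∀ i : Fin r, f (i, false) ≠ f (i, true)) ∧
        Odd (Finset.univ.filter (fun i : Fin r => f (i, false) = true)).card) := by
  have hnz : NeZero r := ⟨by omega⟩
  refine ⟨Finset.image (phi r) Finset.univ, ?_, ?_, ?_⟩
  · intro φ hφ
    simp only [Finset.mem_image, Finset.mem_univ, true_and] at hφ
    obtain ⟨s, rfl⟩ := hφ
    simp only [Finset.mem_filter, Finset.mem_univ, true_and]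
    intro i
    cases hs : s i
    · exact Or.inl ⟨(mem_pdom_phi r s (i, false)).mpr (by simp [hs]),
        fun h => by simpa [hs] using (mem_pdom_phi r s (i, true)).mp h⟩
    · exact Or.inr ⟨fun h => by simpa [hs] using (mem_pdom_phi r s (i, false)).mp h,
        (mem_pdom_phi r s (i, true)).mpr (by simp [hs])⟩
  · intro e he
    simp only [Finset.mem_filter, Finset.mem_univ, true_and] at he
    refine ⟨phi r (fun i => decide ((i, true) ∈ e)),
      ⟨Finset.mem_image_of_mem _ (Finset.mem_univ _), ?_⟩, ?_⟩
    · ext ⟨i, b⟩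
      rw [mem_pdom_phi]
      rcases he i with ⟨h1, h2⟩ | ⟨h1, h2⟩ <;> cases b <;> simp [h1, h2]
    · rintro φ' ⟨hφ', hdom⟩
      simp only [Finset.mem_image, Finset.mem_univ, true_and] at hφ'
      obtain ⟨s, rfl⟩ := hφ'
      have hs : s = fun i => decide ((i, true) ∈ e) := by
        funext i
        have h := (mem_pdom_phi r s (i, true))
        rw [hdom] at h
        simp only at h
        cases hsi : s i
        · simp only [hsi] at h
          simp [h.not.mpr (by simp)]
        · simp only [hsi] at h
          simp [h.mpr trivial]
      rw [hs]
  · intro f hF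
    by_cases hA : ∃ i0, f (i0, false) = f (i0, true)
    · exfalso
      obtain ⟨i0, hv⟩ := hA
      set t : ℕ → Bool := fun k => Nat.rec (f (i0, false)) (fun k ih => f (i0 + 1 + (k : Fin r), ih)) k with htdef
      set s : Fin r → Bool := fun j => t ((j - (i0 + 1)).val) with hsdef
      refine hF (phi r s) (Finset.mem_image_of_mem _ (Finset.mem_univ _)) (extends_phi r s f ?_)
      intro i
      by_cases hi : i = i0
      · subst hi
        have h1 : s (i + 1) = f (i, false) := by
          rw [hsdef]; simp only; rw [sub_self]; rfl
        rw [h1]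
        cases hsi : s i
        · rfl
        · exact hv.symm
      · have hm : i - i0 ≠ 0 := sub_ne_zero_of_ne hi
        have hk : (i - i0).val = ((i - i0) - 1).val + 1 := fin_pred_val r _ hm
        have e1 : i + 1 - (i0 + 1) = i - i0 := by ring
        have e2 : i - (i0 + 1) = (i - i0) - 1 := by ring
        have e3 : i0 + 1 + (((((i - i0) - 1).val : ℕ) : Fin r)) = i := by
          rw [Fin.cast_val_eq_self]; ring
        have hb : s (i + 1) = t (((i - i0) - 1).val + 1) := by
          rw [hsdef]; simp only; rw [e1, hk]
        have hc : s i = t (((i - i0) - 1).val) := by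
          rw [hsdef]; simp only; rw [e2]
        rw [hb, hc]
        show f (i, t (((i - i0) - 1).val)) =
          f (i0 + 1 + ((((i - i0) - 1).val : ℕ) : Fin r), t (((i - i0) - 1).val))
        rw [e3]
    · have hA' : ∀ i, f (i, false) ≠ f (i, true) := by push_neg at hA; exact hA
      refine ⟨hA', ?_⟩
      by_contra hodd
      have hf : ∀ i b, f (i, b) = xor (f (i, false)) b := by
        intro i b
        cases b
        · simp
        · have h := hA' i
          cases h1 : f (i, false) <;> cases h2 : f (i, true) <;> simp_all
      set t : ℕ → Bool := fun k => Nat.rec false (fun k ih => xor ih (f (((k : ℕ) : Fin r), false))) k with htdef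
      have cardstep : ∀ (k : ℕ) (hk : k < r),
          (Finset.univ.filter (fun i : Fin r => i.val < k + 1 ∧ f (i, false) = true)).card
          = (Finset.univ.filter (fun i : Fin r => i.val < k ∧ f (i, false) = true)).card
            + (if f ((⟨k, hk⟩ : Fin r), false) = true then 1 else 0) := by
        intro k hk
        by_cases hp : f ((⟨k, hk⟩ : Fin r), false) = true
        · rw [if_pos hp]
          have hins : (Finset.univ.filter (fun i : Fin r => i.val < k + 1 ∧ f (i, false) = true))
              = insert (⟨k, hk⟩ : Fin r)
                (Finset.univ.filter (fun i : Fin r => i.val < k ∧ f (i, false) = true)) := by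
            ext i
            simp only [Finset.mem_insert, Finset.mem_filter, Finset.mem_univ, true_and]
            constructor
            · rintro ⟨h1, h2⟩
              rcases Nat.lt_or_ge i.val k with h | h
              · exact Or.inr ⟨h, h2⟩
              · exact Or.inl (Fin.ext (by simp; omega))
            · rintro (rfl | ⟨h1, h2⟩)
              · exact ⟨Nat.lt_succ_self k, hp⟩
              · exact ⟨by omega, h2⟩
          rw [hins, Finset.card_insert_of_notMem (by simp)]
        · rw [if_neg hp]
          have heq : (Finset.univ.filter (fun i : Fin r => i.val < k + 1 ∧ f (i, false) = true))
              = (Finset.univ.filter (fun i : Fin r => i.val < k ∧ f (i, false) = true)) := by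
            ext i
            simp only [Finset.mem_filter, Finset.mem_univ, true_and]
            constructor
            · rintro ⟨h1, h2⟩
              refine ⟨?_, h2⟩
              rcases Nat.lt_or_ge i.val k with h | h
              · exact h
              · exfalso
                have : i = (⟨k, hk⟩ : Fin r) := Fin.ext (by simp; omega)
                rw [this] at h2
                exact hp h2
            · rintro ⟨h1, h2⟩
              exact ⟨by omega, h2⟩
          rw [heq]
          omega
      have tstep : ∀ k : ℕ, t (k + 1) = xor (t k) (f (((k : ℕ) : Fin r), false)) := fun k => rfl
      have key : ∀ k, k ≤ r →
          (t k = true ↔ Odd ((Finset.univ.filter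
            (fun i : Fin r => i.val < k ∧ f (i, false) = true)).card)) := by
        intro k
        induction k with
        | zero => intro _; simp [htdef]
        | succ k ih =>
          intro hk
          have hk' : k < r := hk
          have hcast : ((k : ℕ) : Fin r) = (⟨k, hk'⟩ : Fin r) :=
            Fin.ext (by simp [Nat.mod_eq_of_lt hk'])
          rw [cardstep k hk', tstep k, hcast]
          have ihx := ih (Nat.le_of_succ_le hk)
          by_cases hp : f ((⟨k, hk'⟩ : Fin r), false) = true
          · rw [if_pos hp, hp]
            rw [Nat.odd_add_one, ← ihx]
            cases ht : t k <;> simp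
          · have hp' : f ((⟨k, hk'⟩ : Fin r), false) = false := by
              cases h : f ((⟨k, hk'⟩ : Fin r), false)
              · rfl
              · exact absurd h hp
            rw [if_neg hp, hp']
            simpa using ihx
      have hfull : (Finset.univ.filter (fun i : Fin r => i.val < r ∧ f (i, false) = true))
          = (Finset.univ.filter (fun i : Fin r => f (i, false) = true)) := by
        ext i
        simp [i.isLt]
      have htr : t r = false := by
        have hkr := key r le_rfl
        rw [hfull] at hkr
        cases h : t r
        · rfl
        · exact absurd (hkr.mp h) hodd
      set s : Fin r → Bool := fun j => t j.val with hsdef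
      refine hF (phi r s) (Finset.mem_image_of_mem _ (Finset.mem_univ _)) (extends_phi r s f ?_)
      intro i
      rw [hf i (s i)]
      have hv1 : (i + 1).val = (i.val + 1) % r := by
        have h2 : (i + 1).val = (i.val + (1 : Fin r).val) % r := by rw [Fin.add_def]
        rw [Fin.val_one'] at h2
        rw [h2]
        conv_rhs => rw [Nat.add_mod, Nat.mod_eq_of_lt i.isLt]
      have hsi : s i = t i.val := rfl
      by_cases hlast : i.val + 1 = r
      · have h0 : (i + 1).val = 0 := by rw [hv1, hlast, Nat.mod_self]
        have hs1 : s (i + 1) = false := by rw [hsdef]; simp only; rw [h0]; rfl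
        rw [hs1, hsi]
        have hx := tstep i.val
        rw [Fin.cast_val_eq_self, hlast, htr] at hx
        rw [Bool.xor_comm]
        exact hx.symm
      · have h1 : (i + 1).val = i.val + 1 := by rw [hv1, Nat.mod_eq_of_lt (by omega)]
        have hs1 : s (i + 1) = t (i.val + 1) := by rw [hsdef]; simp only; rw [h1]
        rw [hs1, tstep i.val, Fin.cast_val_eq_self, Bool.xor_comm, hsi]
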